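/- Let G be a simple graph with maximum degree Δ and minimum degree δ. If Δ - δ ≥ 2 then s_Q(G) ≥ sqrt((Δ-δ)² + 2Δ + 2δ), and if Δ - δ ≤ 1 then s_Q(G) ≥ 2√Δ. -/

import Mathlib

open Matrix

/-- The spread of a Hermitian real matrix: largest minus smallest eigenvalue. -/
noncomputable def spread {n : ℕ} {A : Matrix (Fin n) (Fin n) ℝ} (hA : A.IsHermitian) : ℝ :=
  (⨆ i, hA.eigenvalues i) - ⨅ i, hA.eigenvalues i

/-- The signless Laplacian matrix Q = D + A of a simple graph. -/
noncomputable def signlessLaplacian {n : ℕ} (G : SimpleGraph (Fin n)) [DecidableRel G.Adj] :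
    Matrix (Fin n) (Fin n) ℝ :=
  Matrix.diagonal (fun i => (G.degree i : ℝ)) + G.adjMatrix ℝ

/-- Row-norm bound: for a real symmetric matrix whose eigenvalues all lie within squared
distance `r` of `c`, each row of `A - c•1` has squared norm at most `r`. -/
lemma row_sq_bound {n : ℕ} {A : Matrix (Fin n) (Fin n) ℝ} (hA : A.IsHermitian)
    (c r : ℝ) (hr : ∀ k, (hA.eigenvalues k - c) ^ 2 ≤ r) (i : Fin n) :
    ∑ s, ((A - c • (1 : Matrix (Fin n) (Fin n) ℝ)) i s) ^ 2 ≤ r := by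
  set U : Matrix (Fin n) (Fin n) ℝ := (hA.eigenvectorUnitary : Matrix (Fin n) (Fin n) ℝ) with hUdef
  have hU1 : U * star U = 1 := Matrix.mem_unitaryGroup_iff.mp (hA.eigenvectorUnitary).2
  have hU2 : star U * U = 1 := Matrix.mem_unitaryGroup_iff'.mp (hA.eigenvectorUnitary).2
  set B : Matrix (Fin n) (Fin n) ℝ := A - c • 1 with hBdef
  have hBherm : B.IsHermitian := hA.sub (by simp [Matrix.IsHermitian])
  have hspec : A = U * Matrix.diagonal (fun k => hA.eigenvalues k) * star U := by
    have h := hA.spectral_theorem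
    rw [Unitary.conjStarAlgAut_apply] at h
    exact h
  have hB : B = U * Matrix.diagonal (fun k => hA.eigenvalues k - c) * star U := by
    have h2 : c • (1 : Matrix (Fin n) (Fin n) ℝ)
        = U * Matrix.diagonal (fun _ : Fin n => c) * star U := by
      rw [← Matrix.smul_one_eq_diagonal]
      rw [Matrix.mul_smul, mul_one, Matrix.smul_mul, hU1]
    have h3 : Matrix.diagonal (fun k => hA.eigenvalues k - c)
        = Matrix.diagonal (fun k => hA.eigenvalues k) - Matrix.diagonal (fun _ : Fin n => c) := by
      rw [Matrix.diagonal_sub]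
    rw [hBdef, h3, Matrix.mul_sub, Matrix.sub_mul, ← hspec, ← h2]
  have hBB : B * B = U * Matrix.diagonal (fun k => (hA.eigenvalues k - c) ^ 2) * star U := by
    rw [hB]
    calc (U * Matrix.diagonal (fun k => hA.eigenvalues k - c) * star U) *
          (U * Matrix.diagonal (fun k => hA.eigenvalues k - c) * star U)
        = U * Matrix.diagonal (fun k => hA.eigenvalues k - c) * (star U * U) *
          Matrix.diagonal (fun k => hA.eigenvalues k - c) * star U := by
          simp only [Matrix.mul_assoc]
      _ = U * (Matrix.diagonal (fun k => hA.eigenvalues k - c) *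
          Matrix.diagonal (fun k => hA.eigenvalues k - c)) * star U := by
          rw [hU2, mul_one]; simp only [Matrix.mul_assoc]
      _ = _ := by
          rw [Matrix.diagonal_mul_diagonal]
          have hfun : (fun k => (hA.eigenvalues k - c) * (hA.eigenvalues k - c))
              = fun k => (hA.eigenvalues k - c) ^ 2 := funext fun k => (sq _).symm
          rw [hfun]
  have key : ∑ s, (B i s) ^ 2 = ∑ k, (hA.eigenvalues k - c) ^ 2 * (U i k) ^ 2 := by
    have h1 : ∑ s, (B i s) ^ 2 = (B * B) i i := by
      rw [Matrix.mul_apply]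
      refine Finset.sum_congr rfl fun s _ => ?_
      rw [pow_two]
      congr 1
      rw [← hBherm.apply s i, star_trivial]
    rw [h1, hBB, Matrix.mul_apply]
    refine Finset.sum_congr rfl fun k _ => ?_
    rw [Matrix.mul_diagonal, Matrix.star_apply, star_trivial]
    ring
  have hnorm : ∑ k, (U i k) ^ 2 = 1 := by
    have : (U * star U) i i = (1 : Matrix (Fin n) (Fin n) ℝ) i i := by rw [hU1]
    rw [Matrix.mul_apply] at this
    simp only [Matrix.star_apply, star_trivial, Matrix.one_apply_eq] at this
    rw [← this]
    exact Finset.sum_congr rfl fun k _ => by ring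
  calc ∑ s, (B i s) ^ 2 = ∑ k, (hA.eigenvalues k - c) ^ 2 * (U i k) ^ 2 := key
    _ ≤ ∑ k, r * (U i k) ^ 2 :=
        Finset.sum_le_sum fun k _ => mul_le_mul_of_nonneg_right (hr k) (sq_nonneg _)
    _ = r * ∑ k, (U i k) ^ 2 := by rw [Finset.mul_sum]
    _ = r := by rw [hnorm, mul_one]

theorem spread_Q_degree_lower_bounds {n : ℕ} (G : SimpleGraph (Fin n)) [DecidableRel G.Adj]
    (hm : 0 < G.edgeFinset.card) (hQ : (signlessLaplacian G).IsHermitian) :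
    (G.minDegree + 2 ≤ G.maxDegree →
      spread hQ ≥ Real.sqrt (((G.maxDegree : ℝ) - (G.minDegree : ℝ)) ^ 2
        + 2 * (G.maxDegree : ℝ) + 2 * (G.minDegree : ℝ))) ∧
    (G.maxDegree ≤ G.minDegree + 1 →
      spread hQ ≥ 2 * Real.sqrt (G.maxDegree : ℝ)) := by
  haveI hne : Nonempty (Fin n) := by
    obtain ⟨e, -⟩ := Finset.card_pos.mp hm
    exact ⟨(Quot.out e).1⟩
  set lam := hQ.eigenvalues with hlam
  set M := ⨆ k, lam k with hM
  set m := ⨅ k, lam k with hm'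
  set c : ℝ := (M + m) / 2 with hc
  have hub : ∀ k, lam k ≤ M := fun k =>
    le_ciSup (Set.Finite.bddAbove (Set.finite_range lam)) k
  have hlb : ∀ k, m ≤ lam k := fun k =>
    ciInf_le (Set.Finite.bddBelow (Set.finite_range lam)) k
  have hs0 : 0 ≤ M - m := by
    have := hub (Classical.arbitrary (Fin n))
    have := hlb (Classical.arbitrary (Fin n))
    linarith
  have hr : ∀ k, (lam k - c) ^ 2 ≤ ((M - m) / 2) ^ 2 := by
    intro k
    have h1 := hub k
    have h2 := hlb k
    nlinarith [mul_nonneg (sub_nonneg.mpr h1) (sub_nonneg.mpr h2)]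
  -- per-vertex inequality
  have hrow : ∀ i : Fin n, ((G.degree i : ℝ) - c) ^ 2 + (G.degree i : ℝ)
      ≤ ((M - m) / 2) ^ 2 := by
    intro i
    have hb := row_sq_bound hQ c (((M - m) / 2) ^ 2) hr i
    have hsum : ∑ s, ((signlessLaplacian G - c • (1 : Matrix (Fin n) (Fin n) ℝ)) i s) ^ 2
        = ((G.degree i : ℝ) - c) ^ 2 + (G.degree i : ℝ) := by
      rw [← Finset.add_sum_erase _ _ (Finset.mem_univ i)]
      congr 1
      · simp [signlessLaplacian, Matrix.sub_apply, Matrix.add_apply, Matrix.one_apply,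
          Matrix.diagonal_apply_eq]
      · have h1 : ∀ s ∈ Finset.univ.erase i,
            ((signlessLaplacian G - c • (1 : Matrix (Fin n) (Fin n) ℝ)) i s) ^ 2
            = if G.Adj i s then (1 : ℝ) else 0 := by
          intro s hs
          have hsi : i ≠ s := (Finset.ne_of_mem_erase hs).symm
          simp [signlessLaplacian, Matrix.sub_apply, Matrix.add_apply,
            Matrix.one_apply_ne hsi, Matrix.diagonal_apply_ne _ hsi,
            SimpleGraph.adjMatrix_apply]
        rw [Finset.sum_congr rfl h1]
        rw [Finset.sum_erase _ (by simp)]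
        rw [Finset.sum_boole]
        rw [SimpleGraph.degree, SimpleGraph.neighborFinset_eq_filter]
    rw [hsum] at hb
    exact hb
  obtain ⟨vmax, hvmax⟩ := G.exists_maximal_degree_vertex
  obtain ⟨vmin, hvmin⟩ := G.exists_minimal_degree_vertex
  have h1 := hrow vmax
  have h2 := hrow vmin
  rw [← hvmax] at h1
  rw [← hvmin] at h2
  have hspread : spread hQ = M - m := rfl
  constructor
  · intro _
    have hE : ((G.maxDegree : ℝ) - (G.minDegree : ℝ)) ^ 2 + 2 * (G.maxDegree : ℝ)
        + 2 * (G.minDegree : ℝ) ≤ (M - m) ^ 2 := by nlinarith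
    rw [ge_iff_le, hspread]
    calc Real.sqrt _ ≤ Real.sqrt ((M - m) ^ 2) := Real.sqrt_le_sqrt hE
      _ = M - m := Real.sqrt_sq hs0
  · intro _
    have hD : (G.maxDegree : ℝ) ≤ ((M - m) / 2) ^ 2 := by nlinarith
    have : Real.sqrt (G.maxDegree : ℝ) ≤ (M - m) / 2 := by
      calc Real.sqrt _ ≤ Real.sqrt (((M - m) / 2) ^ 2) := Real.sqrt_le_sqrt hD
        _ = (M - m) / 2 := Real.sqrt_sq (by linarith)
    rw [ge_iff_le, hspread]
    linarith
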